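/- Let q, m, v₀, v₁ be natural numbers with v₀ < m and v₁ < m, and let S be any set of natural numbers (with decidable membership). Then the absolute difference between the number of u ∈ {0, 1, …, q−1} with u + v₀ ∈ S and the number of u ∈ {0, 1, …, q−1} with u + v₁ ∈ S is at most m. -/
import Mathlib

open Finset

lemma count_shift (q v : ℕ) (S : Set ℕ) [DecidablePred (· ∈ S)] :
    ((Finset.range q).filter (fun u => u + v ∈ S)).card
      = ((Finset.Ico v (q + v)).filter (· ∈ S)).card := by
  apply Finset.card_bij (fun u _ => u + v)
  · intro a ha
    simp only [mem_filter, mem_range, mem_Ico] at ha ⊢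
    exact ⟨⟨Nat.le_add_left _ _, by omega⟩, ha.2⟩
  · intro a ha b hb h; omega
  · intro b hb
    simp only [mem_filter, mem_Ico] at hb
    refine ⟨b - v, ?_, by omega⟩
    simp only [mem_filter, mem_range]
    exact ⟨by omega, by simpa [Nat.sub_add_cancel hb.1.1] using hb.2⟩

lemma ico_count_mono (q a b : ℕ) (hab : a ≤ b) (S : Set ℕ) [DecidablePred (· ∈ S)] :
    ((Finset.Ico a (q + a)).filter (· ∈ S)).card
      ≤ ((Finset.Ico b (q + b)).filter (· ∈ S)).card + (b - a) := by
  have hsub : Finset.Ico a (q + a) ⊆ Finset.Ico a b ∪ Finset.Ico b (q + b) := by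
    intro x hx
    simp only [mem_Ico, mem_union] at hx ⊢
    omega
  calc ((Finset.Ico a (q + a)).filter (· ∈ S)).card
      ≤ ((Finset.Ico a b ∪ Finset.Ico b (q + b)).filter (· ∈ S)).card :=
        Finset.card_le_card (Finset.filter_subset_filter _ hsub)
    _ ≤ ((Finset.Ico a b).filter (· ∈ S)).card + ((Finset.Ico b (q + b)).filter (· ∈ S)).card := by
        rw [Finset.filter_union]; exact Finset.card_union_le _ _
    _ ≤ (b - a) + ((Finset.Ico b (q + b)).filter (· ∈ S)).card := by
        gcongr
        calc ((Finset.Ico a b).filter (· ∈ S)).card ≤ (Finset.Ico a b).card :=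
              Finset.card_filter_le _ _
          _ = b - a := Nat.card_Ico a b
    _ = _ := Nat.add_comm _ _

lemma ico_count_mono' (q a b : ℕ) (hab : a ≤ b) (S : Set ℕ) [DecidablePred (· ∈ S)] :
    ((Finset.Ico b (q + b)).filter (· ∈ S)).card
      ≤ ((Finset.Ico a (q + a)).filter (· ∈ S)).card + (b - a) := by
  have hsub : Finset.Ico b (q + b) ⊆ Finset.Ico a (q + a) ∪ Finset.Ico (q + a) (q + b) := by
    intro x hx
    simp only [mem_Ico, mem_union] at hx ⊢
    omega
  calc ((Finset.Ico b (q + b)).filter (· ∈ S)).card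
      ≤ ((Finset.Ico a (q + a) ∪ Finset.Ico (q + a) (q + b)).filter (· ∈ S)).card :=
        Finset.card_le_card (Finset.filter_subset_filter _ hsub)
    _ ≤ ((Finset.Ico a (q + a)).filter (· ∈ S)).card
        + ((Finset.Ico (q + a) (q + b)).filter (· ∈ S)).card := by
        rw [Finset.filter_union]; exact Finset.card_union_le _ _
    _ ≤ ((Finset.Ico a (q + a)).filter (· ∈ S)).card + (b - a) := by
        gcongr
        calc ((Finset.Ico (q + a) (q + b)).filter (· ∈ S)).card
            ≤ (Finset.Ico (q + a) (q + b)).card := Finset.card_filter_le _ _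
          _ = b - a := by rw [Nat.card_Ico]; omega

/-- Statistical receipt freeness of the revealed value `w = u + v`: for any
acceptance set `S`, the counts of keys `u ∈ [0, q)` with `u + v₀ ∈ S` and with
`u + v₁ ∈ S` differ by at most `m`. -/
theorem receipt_freeness_statistical (q m v₀ v₁ : ℕ)
    (hv₀ : v₀ < m) (hv₁ : v₁ < m) (S : Set ℕ) [DecidablePred (· ∈ S)] :
    ((((Finset.range q).filter (fun u => u + v₀ ∈ S)).card : ℤ) -
      (((Finset.range q).filter (fun u => u + v₁ ∈ S)).card : ℤ)).natAbs ≤ m := by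
  rw [count_shift q v₀ S, count_shift q v₁ S]
  rcases le_total v₀ v₁ with h | h
  · have h1 := ico_count_mono q v₀ v₁ h S
    have h2 := ico_count_mono' q v₀ v₁ h S
    omega
  · have h1 := ico_count_mono q v₁ v₀ h S
    have h2 := ico_count_mono' q v₁ v₀ h S
    omega
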